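/- Extended Karamata inequality: let (x_k) and (y_k) be decreasing sequences in (0,1) with ∑_{k=1}^N x_k ≤ ∑_{k=1}^N y_k for every N ≥ 1 and ∑_{k=1}^∞ x_k = ∑_{k=1}^∞ y_k < ∞. Then for every convex function Φ : (0,1) → ℝ, ∑_{k=1}^∞ Φ(x_k) ≤ ∑_{k=1}^∞ Φ(y_k) (both sums being well-defined in the extended reals). -/

import Mathlib

open Filter Topology

/-- Partial sums with eventually nonneg terms are eventually monotone. -/
private lemma karamata_sum_mono {g : ℕ → ℝ} {k0 : ℕ} (h : ∀ k, k0 ≤ k → 0 ≤ g k)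
    {m n : ℕ} (hm : k0 ≤ m) (hmn : m ≤ n) :
    ∑ k ∈ Finset.range m, g k ≤ ∑ k ∈ Finset.range n, g k := by
  rw [Finset.range_eq_Ico, Finset.range_eq_Ico, ← Finset.sum_Ico_consecutive g (Nat.zero_le m) hmn]
  have h0 : 0 ≤ ∑ k ∈ Finset.Ico m n, g k :=
    Finset.sum_nonneg fun k hk => h k (le_trans hm (Finset.mem_Ico.mp hk).1)
  linarith

private lemma karamata_exists_limit_mono {f : ℕ → ℝ} (k0 : ℕ) (h : ∀ n, k0 ≤ n → f n ≤ f (n + 1)) :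
    ∃ S : EReal, Tendsto (fun n => (f n : EReal)) atTop (𝓝 S) := by
  have hmono : Monotone (fun n => f (n + k0)) :=
    monotone_nat_of_le_succ fun n => by
      have := h (n + k0) (Nat.le_add_left _ _)
      simpa [Nat.add_right_comm] using this
  by_cases hb : BddAbove (Set.range fun n => f (n + k0))
  · refine ⟨((⨆ n, f (n + k0) : ℝ) : EReal), ?_⟩
    rw [← tendsto_add_atTop_iff_nat k0]
    exact EReal.tendsto_coe.mpr (tendsto_atTop_ciSup hmono hb)
  · refine ⟨⊤, ?_⟩
    rw [← tendsto_add_atTop_iff_nat k0, EReal.tendsto_nhds_top_iff_real]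
    intro r
    have ht := tendsto_atTop_atTop_of_monotone' hmono hb
    filter_upwards [ht.eventually_gt_atTop r] with n hn
    exact_mod_cast hn

private lemma karamata_exists_limit_anti {f : ℕ → ℝ} (k0 : ℕ) (h : ∀ n, k0 ≤ n → f (n + 1) ≤ f n) :
    ∃ S : EReal, Tendsto (fun n => (f n : EReal)) atTop (𝓝 S) := by
  obtain ⟨S, hS⟩ := karamata_exists_limit_mono (f := fun n => -f n) k0
    (fun n hn => by simpa using h n hn)
  refine ⟨-S, ?_⟩
  have := hS.neg
  simp only [← EReal.coe_neg, neg_neg] at this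
  exact this

noncomputable def karamataSlope (Φ : ℝ → ℝ) (a : ℝ) : ℝ :=
  sInf ((fun t => (Φ t - Φ a) / (t - a)) '' Set.Ioo a 1)

section
variable {Φ : ℝ → ℝ} (hΦ : ConvexOn ℝ (Set.Ioo 0 1) Φ)
include hΦ

private lemma karamataSlope_lb {a p : ℝ} (ha : a ∈ Set.Ioo (0:ℝ) 1) (hp : p ∈ Set.Ioo (0:ℝ) 1)
    (hpa : p < a) :
    (Φ p - Φ a) / (p - a) ∈ lowerBounds ((fun t => (Φ t - Φ a) / (t - a)) '' Set.Ioo a 1) := by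
  rintro _ ⟨t, ht, rfl⟩
  exact hΦ.secant_mono ha hp ⟨ha.1.trans ht.1, ht.2⟩ hpa.ne (ht.1.ne') (hpa.trans ht.1).le

private lemma karamataSlope_nonempty {a : ℝ} (ha : a ∈ Set.Ioo (0:ℝ) 1) :
    ((fun t => (Φ t - Φ a) / (t - a)) '' Set.Ioo a 1).Nonempty := by
  have hm : (a+1)/2 ∈ Set.Ioo a 1 := by rw [Set.mem_Ioo]; constructor <;> linarith [ha.2]
  exact ⟨_, Set.mem_image_of_mem _ hm⟩

private lemma karamataSlope_bddBelow {a : ℝ} (ha : a ∈ Set.Ioo (0:ℝ) 1) :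
    BddBelow ((fun t => (Φ t - Φ a) / (t - a)) '' Set.Ioo a 1) := by
  have hm : a/2 ∈ Set.Ioo (0:ℝ) 1 := by rw [Set.mem_Ioo]; constructor <;> linarith [ha.1, ha.2]
  exact ⟨_, karamataSlope_lb hΦ ha hm (by linarith [ha.1])⟩

/-- subgradient inequality -/
private lemma karamataSlope_subgrad {a : ℝ} (ha : a ∈ Set.Ioo (0:ℝ) 1) {t : ℝ}
    (ht : t ∈ Set.Ioo (0:ℝ) 1) :
    Φ a + karamataSlope Φ a * (t - a) ≤ Φ t := by
  rcases lt_trichotomy t a with hlt | heq | hgt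
  · have hle : (Φ t - Φ a) / (t - a) ≤ karamataSlope Φ a :=
      le_csInf (karamataSlope_nonempty hΦ ha) (karamataSlope_lb hΦ ha ht hlt)
    have hne : t - a ≠ 0 := by linarith
    have := mul_le_mul_of_nonpos_right hle (by linarith : t - a ≤ 0)
    rw [div_mul_cancel₀ _ hne] at this
    linarith
  · subst heq; simp
  · have hle : karamataSlope Φ a ≤ (Φ t - Φ a) / (t - a) :=
      csInf_le (karamataSlope_bddBelow hΦ ha) (Set.mem_image_of_mem _ ⟨hgt, ht.2⟩)
    have hne : t - a ≠ 0 := by linarith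
    have := mul_le_mul_of_nonneg_right hle (by linarith : 0 ≤ t - a)
    rw [div_mul_cancel₀ _ hne] at this
    linarith

private lemma karamataSlope_mono {a b : ℝ} (ha : a ∈ Set.Ioo (0:ℝ) 1) (hb : b ∈ Set.Ioo (0:ℝ) 1)
    (hab : a ≤ b) : karamataSlope Φ a ≤ karamataSlope Φ b := by
  rcases eq_or_lt_of_le hab with rfl | hab
  · exact le_refl _
  · -- karamataSlope a ≤ slope a b = slope b a ≤ every slope b t
    have h1 : karamataSlope Φ a ≤ (Φ b - Φ a) / (b - a) :=
      csInf_le (karamataSlope_bddBelow hΦ ha) (Set.mem_image_of_mem _ ⟨hab, hb.2⟩)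
    have h2 : (Φ b - Φ a) / (b - a) = (Φ a - Φ b) / (a - b) := by
      rw [← neg_div_neg_eq]; ring_nf
    refine le_csInf (karamataSlope_nonempty hΦ hb) ?_
    rintro _ ⟨t, ht, rfl⟩
    refine h1.trans ?_
    rw [h2]
    exact hΦ.secant_mono hb ha ⟨hb.1.trans ht.1, ht.2⟩ hab.ne (ht.1.ne') (hab.trans ht.1).le

end

theorem extended_karamata (x y : ℕ → ℝ) (hx : Antitone x) (hy : Antitone y)
    (hx01 : ∀ k, x k ∈ Set.Ioo (0 : ℝ) 1) (hy01 : ∀ k, y k ∈ Set.Ioo (0 : ℝ) 1)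
    (hmaj : ∀ N : ℕ, ∑ k ∈ Finset.range N, x k ≤ ∑ k ∈ Finset.range N, y k)
    (hsx : Summable x) (hsy : Summable y)
    (hsum : ∑' k, x k = ∑' k, y k)
    (Φ : ℝ → ℝ) (hΦ : ConvexOn ℝ (Set.Ioo 0 1) Φ) :
    ∃ Sx Sy : EReal,
      Tendsto (fun N => ((∑ k ∈ Finset.range N, Φ (x k) : ℝ) : EReal)) atTop (𝓝 Sx) ∧
      Tendsto (fun N => ((∑ k ∈ Finset.range N, Φ (y k) : ℝ) : EReal)) atTop (𝓝 Sy) ∧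
      Sx ≤ Sy := by
  classical
  set Fx : ℕ → ℝ := fun N => ∑ k ∈ Finset.range N, Φ (x k) with hFxdef
  set Fy : ℕ → ℝ := fun N => ∑ k ∈ Finset.range N, Φ (y k) with hFydef
  have hx0 : Tendsto x atTop (𝓝 0) := hsx.tendsto_atTop_zero
  have hy0 : Tendsto y atTop (𝓝 0) := hsy.tendsto_atTop_zero
  -- sign dichotomy near 0
  have dicho : ∀ z : ℕ → ℝ, (∀ k, z k ∈ Set.Ioo (0:ℝ) 1) → Tendsto z atTop (𝓝 0) →
      (∃ k0, ∀ k, k0 ≤ k → 0 ≤ Φ (z k)) ∨ (∃ k0, ∀ k, k0 ≤ k → Φ (z k) ≤ 0) := by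
    intro z hz01 hz0
    by_cases H : ∃ ε > (0:ℝ), ∀ t, 0 < t → t < ε → 0 ≤ Φ t
    · obtain ⟨ε, hε, hΦpos⟩ := H
      obtain ⟨k0, hk0⟩ := eventually_atTop.mp (hz0.eventually_lt_const hε)
      exact Or.inl ⟨k0, fun k hk => hΦpos _ (hz01 k).1 (hk0 k hk)⟩
    · push_neg at H
      obtain ⟨b, hb0, hb1, hbneg⟩ : ∃ b, 0 < b ∧ b < 1 ∧ Φ b < 0 := by
        obtain ⟨t, ht0, ht1, htneg⟩ := H 1 one_pos
        exact ⟨t, ht0, ht1, htneg⟩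
      have key : ∀ s, 0 < s → s < b → Φ s < 0 := by
        intro s hs0 hsb
        obtain ⟨t, ht0, hts, htneg⟩ := H s hs0
        have htneg' : Φ t < 0 := htneg
        set lam : ℝ := (b - s) / (b - t) with hlam
        set mu : ℝ := (s - t) / (b - t) with hmu
        have hbt : 0 < b - t := by linarith
        have hlam0 : 0 < lam := div_pos (by linarith) hbt
        have hmu0 : 0 ≤ mu := div_nonneg (by linarith) hbt.le
        have hlm : lam + mu = 1 := by rw [hlam, hmu, ← add_div]; field_simp; ring
        have hcomb : lam • t + mu • b = s := by
          simp only [smul_eq_mul, hlam, hmu]; field_simp; ring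
        have ht01 : t ∈ Set.Ioo (0:ℝ) 1 := ⟨ht0, by linarith⟩
        have hb01 : b ∈ Set.Ioo (0:ℝ) 1 := ⟨hb0, hb1⟩
        have := hΦ.2 ht01 hb01 hlam0.le hmu0 hlm
        rw [hcomb] at this
        simp only [smul_eq_mul] at this
        have h1 : lam * Φ t < 0 := mul_neg_of_pos_of_neg hlam0 htneg'
        have h2 : mu * Φ b ≤ 0 := mul_nonpos_of_nonneg_of_nonpos hmu0 hbneg.le
        linarith
      obtain ⟨k0, hk0⟩ := eventually_atTop.mp (hz0.eventually_lt_const hb0)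
      exact Or.inr ⟨k0, fun k hk => (key _ (hz01 k).1 (hk0 k hk)).le⟩
  -- existence of the limits
  have exlim : ∀ z : ℕ → ℝ, (∀ k, z k ∈ Set.Ioo (0:ℝ) 1) → Tendsto z atTop (𝓝 0) →
      ∃ S : EReal, Tendsto (fun N => ((∑ k ∈ Finset.range N, Φ (z k) : ℝ) : EReal)) atTop (𝓝 S) := by
    intro z hz01 hz0
    rcases dicho z hz01 hz0 with ⟨k0, hk0⟩ | ⟨k0, hk0⟩
    · exact karamata_exists_limit_mono k0 (fun n hn => by
        rw [Finset.sum_range_succ]; linarith [hk0 n hn])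
    · exact karamata_exists_limit_anti k0 (fun n hn => by
        rw [Finset.sum_range_succ]; linarith [hk0 n hn])
  obtain ⟨Sx, hSx⟩ := exlim x hx01 hx0
  obtain ⟨Sy, hSy⟩ := exlim y hy01 hy0
  refine ⟨Sx, Sy, hSx, hSy, ?_⟩
  -- the subgradient sequence
  set c : ℕ → ℝ := fun k => karamataSlope Φ (x k) with hcdef
  have hsub : ∀ k, ∀ t ∈ Set.Ioo (0:ℝ) 1, Φ (x k) + c k * (t - x k) ≤ Φ t :=
    fun k t ht => karamataSlope_subgrad hΦ (hx01 k) ht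
  have hcmono : ∀ k l, k ≤ l → c l ≤ c k :=
    fun k l hkl => karamataSlope_mono hΦ (hx01 l) (hx01 k) (hx hkl)
  set A : ℕ → ℝ := fun N => ∑ k ∈ Finset.range N, (y k - x k) with hAdef
  have hA0 : ∀ N, 0 ≤ A N := by
    intro N
    have := hmaj N
    show (0:ℝ) ≤ ∑ k ∈ Finset.range N, (y k - x k)
    rw [Finset.sum_sub_distrib]
    linarith
  have claim1 : ∀ N, c N * A (N+1) ≤ ∑ k ∈ Finset.range (N+1), c k * (y k - x k) := by
    intro N
    induction N with
    | zero => simp [hAdef]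
    | succ n ih =>
      have h1 : c (n+1) * A (n+1) ≤ c n * A (n+1) :=
        mul_le_mul_of_nonneg_right (hcmono n (n+1) (Nat.le_succ n)) (hA0 (n+1))
      have hAs : A (n+1+1) = A (n+1) + (y (n+1) - x (n+1)) := Finset.sum_range_succ _ _
      have hs : (∑ k ∈ Finset.range (n+1+1), c k * (y k - x k)) =
          (∑ k ∈ Finset.range (n+1), c k * (y k - x k)) + c (n+1) * (y (n+1) - x (n+1)) :=
        Finset.sum_range_succ _ _
      rw [hAs, hs]
      nlinarith [ih, h1]
  have star : ∀ N, Fx (N+1) + c N * A (N+1) ≤ Fy (N+1) := by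
    intro N
    have h2 : (∑ k ∈ Finset.range (N+1), c k * (y k - x k)) ≤ Fy (N+1) - Fx (N+1) := by
      have hterm : ∀ k ∈ Finset.range (N+1), c k * (y k - x k) ≤ Φ (y k) - Φ (x k) := by
        intro k _
        have := hsub k (y k) (hy01 k)
        linarith
      calc (∑ k ∈ Finset.range (N+1), c k * (y k - x k))
          ≤ ∑ k ∈ Finset.range (N+1), (Φ (y k) - Φ (x k)) := Finset.sum_le_sum hterm
        _ = Fy (N+1) - Fx (N+1) := by simp [hFxdef, hFydef, Finset.sum_sub_distrib]
    linarith [claim1 N]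
  -- reduction lemma
  have KR : (∀ δ : ℝ, 0 < δ → ∃ᶠ N in atTop, Fx N ≤ Fy N + δ) → Sx ≤ Sy := by
    intro hfreq
    by_contra hlt
    rw [not_le] at hlt
    obtain ⟨r, hr1, hr2⟩ := EReal.lt_iff_exists_real_btwn.mp hlt
    obtain ⟨r', hr1', hr2'⟩ := EReal.lt_iff_exists_real_btwn.mp hr2
    have hrr' : r < r' := EReal.coe_lt_coe_iff.mp hr1'
    have hδ : (0:ℝ) < r' - r := by linarith
    have hevx : ∀ᶠ N in atTop, (r' : EReal) < ((Fx N : ℝ) : EReal) := hSx.eventually_const_lt hr2'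
    have hevy : ∀ᶠ N in atTop, ((Fy N : ℝ) : EReal) < (r : EReal) := hSy.eventually_lt_const hr1
    obtain ⟨N, h1, h2⟩ := ((hfreq _ hδ).and_eventually (hevx.and hevy)).exists
    have h2' : r' < Fx N := EReal.coe_lt_coe_iff.mp h2.1
    have h3' : Fy N < r := EReal.coe_lt_coe_iff.mp h2.2
    linarith
  by_cases hcase : ∃ᶠ k in atTop, 0 ≤ c k
  · apply KR
    intro δ hδ
    have hf : ∃ᶠ k in atTop, Fx (k+1) ≤ Fy (k+1) + δ := by
      refine hcase.mono fun k hk => ?_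
      have h4 : 0 ≤ c k * A (k+1) := mul_nonneg hk (hA0 (k+1))
      have := star k
      linarith
    exact (tendsto_add_atTop_nat 1).frequently hf
  · rw [Filter.not_frequently] at hcase
    obtain ⟨k1, hk1⟩ := eventually_atTop.mp hcase
    have hcneg : ∀ k, k1 ≤ k → c k < 0 := fun k hk => lt_of_not_ge (hk1 k hk)
    have hmonoΦx : ∀ k, k1 ≤ k → Φ (x k) ≤ Φ (x (k+1)) := by
      intro k hk
      have hs := hsub k (x (k+1)) (hx01 (k+1))
      have hxk : x (k+1) ≤ x k := hx (Nat.le_succ k)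
      nlinarith [hcneg k hk]
    have hchainΦx : ∀ j k, k1 ≤ j → j ≤ k → Φ (x j) ≤ Φ (x k) := by
      intro j k hj hjk
      obtain ⟨n, rfl⟩ := Nat.exists_eq_add_of_le hjk
      clear hjk
      induction n with
      | zero => simp
      | succ n ih =>
        have h5 := hmonoΦx (j + n) (le_trans hj (Nat.le_add_right _ _))
        have h6 : j + n + 1 = j + (n + 1) := by ring
        rw [h6] at h5
        exact ih.trans h5
    by_cases hSxtop : Sx = ⊤
    · -- then Sy = ⊤ as well
      have hev : ∀ᶠ N in atTop, ((Fx k1 : ℝ) : EReal) < ((Fx N : ℝ) : EReal) :=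
        (hSxtop ▸ hSx).eventually_const_lt (EReal.coe_lt_top _)
      obtain ⟨N, hN1, hN2⟩ := (hev.and (eventually_ge_atTop k1)).exists
      have hN1' : Fx k1 < Fx N := EReal.coe_lt_coe_iff.mp hN1
      have hexj : ∃ j, k1 ≤ j ∧ 0 < Φ (x j) := by
        by_contra hno
        push_neg at hno
        have h7 := karamata_sum_mono (g := fun k => -Φ (x k))
          (fun k hk => neg_nonneg.mpr (hno k hk)) (le_refl k1) hN2
        simp only [Finset.sum_neg_distrib] at h7
        have h7' : Fx N ≤ Fx k1 := by simp only [hFxdef]; linarith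
        linarith
      obtain ⟨j, hjk1, hj⟩ := hexj
      have hlow : ∀ t, 0 < t → t ≤ x j → Φ (x j) ≤ Φ t := by
        intro t ht0 htx
        have hs := hsub j t ⟨ht0, lt_of_le_of_lt htx (hx01 j).2⟩
        nlinarith [hcneg j hjk1]
      obtain ⟨k2, hk2⟩ := eventually_atTop.mp (hy0.eventually_lt_const (hx01 j).1)
      have hFylb : ∀ N, Fy k2 + N * Φ (x j) ≤ Fy (N + k2) := by
        intro N
        induction N with
        | zero => simp
        | succ n ih =>
          have h8 : Fy (n + k2 + 1) = Fy (n + k2) + Φ (y (n + k2)) := Finset.sum_range_succ _ _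
          have h9 : Φ (x j) ≤ Φ (y (n + k2)) :=
            hlow _ (hy01 _).1 (hk2 (n + k2) (Nat.le_add_left _ _)).le
          have h10 : (n + 1 + k2) = (n + k2 + 1) := by ring
          rw [h10, h8]
          push_cast
          linarith
      have htopy : Tendsto (fun N => ((Fy N : ℝ) : EReal)) atTop (𝓝 ⊤) := by
        rw [EReal.tendsto_nhds_top_iff_real]
        intro r
        have hlin : Tendsto (fun N : ℕ => Fy k2 + (N : ℝ) * Φ (x j)) atTop atTop :=
          tendsto_atTop_add_const_left _ _ (tendsto_natCast_atTop_atTop.atTop_mul_const hj)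
        have h11 : Tendsto (fun N => Fy (N + k2)) atTop atTop :=
          tendsto_atTop_mono (fun N => hFylb N) hlin
        have h12 : Tendsto Fy atTop atTop := (tendsto_add_atTop_iff_nat k2).mp h11
        filter_upwards [h12.eventually_gt_atTop r] with N hN
        exact_mod_cast hN
      have hSytop : Sy = ⊤ := tendsto_nhds_unique hSy htopy
      rw [hSytop]
      exact le_top
    by_cases hSxbot : Sx = ⊥
    · rw [hSxbot]; exact bot_le
    -- real case
    have hcoe : ((Sx.toReal : ℝ) : EReal) = Sx := EReal.coe_toReal hSxtop hSxbot
    set s : ℝ := Sx.toReal with hsdef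
    have hFxconv : Tendsto Fx atTop (𝓝 s) := by
      rw [← EReal.tendsto_coe, hcoe]
      exact hSx
    have hnonpos : ∀ k, k1 ≤ k → Φ (x k) ≤ 0 := by
      by_contra hno
      push_neg at hno
      obtain ⟨j, hjk1, hj⟩ := hno
      have hlb : ∀ N, Fx (j + 1) + N * Φ (x j) ≤ Fx (N + (j + 1)) := by
        intro N
        induction N with
        | zero => simp
        | succ n ih =>
          have h8 : Fx (n + (j + 1) + 1) = Fx (n + (j + 1)) + Φ (x (n + (j + 1))) :=
            Finset.sum_range_succ _ _
          have h9 : Φ (x j) ≤ Φ (x (n + (j + 1))) := hchainΦx j _ hjk1 (by omega)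
          have h10 : (n + 1 + (j + 1)) = (n + (j + 1) + 1) := by ring
          rw [h10, h8]
          push_cast
          linarith
      have h11 : Tendsto (fun N => Fx (N + (j + 1))) atTop atTop :=
        tendsto_atTop_mono (fun N => hlb N)
          (tendsto_atTop_add_const_left _ _ (tendsto_natCast_atTop_atTop.atTop_mul_const hj))
      have h12 : Tendsto Fx atTop atTop := (tendsto_add_atTop_iff_nat (j + 1)).mp h11
      exact not_tendsto_nhds_of_tendsto_atTop h12 s hFxconv
    set q : ℕ → ℝ := fun k => -Φ (x k) with hqdef
    have hq0 : ∀ k, k1 ≤ k → 0 ≤ q k := fun k hk => neg_nonneg.mpr (hnonpos k hk)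
    have hFxanti : ∀ m n, k1 ≤ m → m ≤ n → Fx n ≤ Fx m := by
      intro m n hm hmn
      have h7 := karamata_sum_mono (g := q) hq0 hm hmn
      simp only [hqdef, Finset.sum_neg_distrib] at h7
      simp only [hFxdef]
      linarith
    have hFxges : ∀ N, k1 ≤ N → s ≤ Fx N := by
      intro N hN
      refine le_of_tendsto hFxconv ?_
      filter_upwards [eventually_ge_atTop N] with M hM
      exact hFxanti N M hN hM
    have hqsum : Summable q := by
      rw [← summable_nat_add_iff k1]
      apply summable_of_sum_range_le (c := Fx k1 - s) (fun n => hq0 _ (Nat.le_add_left _ _))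
      intro n
      have h14 : Fx (k1 + n) = Fx k1 + ∑ i ∈ Finset.range n, Φ (x (k1 + i)) :=
        Finset.sum_range_add _ _ _
      have h15 : ∑ i ∈ Finset.range n, q (i + k1) = -∑ i ∈ Finset.range n, Φ (x (k1 + i)) := by
        rw [← Finset.sum_neg_distrib]
        exact Finset.sum_congr rfl fun i _ => by rw [hqdef]; simp [Nat.add_comm i k1]
      have h16 := hFxges (k1 + n) (Nat.le_add_right _ _)
      rw [h15]
      linarith
    have hΦx0 : Tendsto (fun k => Φ (x k)) atTop (𝓝 0) := by
      have h16 := hqsum.tendsto_atTop_zero.neg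
      simp only [hqdef, neg_neg, neg_zero] at h16
      exact h16
    have hcx : ∀ j, k1 ≤ j → -c j * x j ≤ q j := by
      intro j hj
      have hlim : Tendsto (fun m => Φ (x m) - (Φ (x j) + c j * (x m - x j))) atTop
          (𝓝 (0 - (Φ (x j) + c j * (0 - x j)))) :=
        hΦx0.sub (tendsto_const_nhds.add ((hx0.sub_const (x j)).const_mul (c j)))
      have h17 : 0 ≤ 0 - (Φ (x j) + c j * (0 - x j)) :=
        ge_of_tendsto hlim (Eventually.of_forall fun m => by linarith [hsub j (x m) (hx01 m)])
      have h18 : q j = -Φ (x j) := by rw [hqdef]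
      nlinarith [h17, h18]
    set Q : ℕ → ℝ := fun M => ∑' i, q (i + M) with hQdef
    have hQ0 : Tendsto Q atTop (𝓝 0) := tendsto_sum_nat_add q
    apply KR
    intro δ hδ
    have hev2 : ∀ᶠ N in atTop, Q (N + 1) < δ :=
      (tendsto_add_atTop_nat 1).eventually (hQ0.eventually_lt_const hδ)
    have hev3 : ∀ᶠ N in atTop, Fx (N + 1) ≤ Fy (N + 1) + δ := by
      filter_upwards [hev2, eventually_ge_atTop k1] with N hQN hNk1
      have hc : (0 : ℝ) ≤ -c N := by linarith [hcneg N hNk1]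
      have hax := Summable.sum_add_tsum_nat_add (f := x) (N + 1) hsx
      have hay := Summable.sum_add_tsum_nat_add (f := y) (N + 1) hsy
      have hty0 : 0 ≤ ∑' i, y (i + (N + 1)) := tsum_nonneg fun i => (hy01 _).1.le
      have hAle : A (N + 1) ≤ ∑' i, x (i + (N + 1)) := by
        have hAeq : A (N + 1)
            = (∑ k ∈ Finset.range (N + 1), y k) - ∑ k ∈ Finset.range (N + 1), x k := by
          show (∑ k ∈ Finset.range (N + 1), (y k - x k)) = _
          rw [Finset.sum_sub_distrib]
        rw [hAeq]
        linarith [hax, hay, hsum]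
      have hsx' : Summable (fun i => x (i + (N + 1))) := (summable_nat_add_iff (N + 1)).mpr hsx
      have hq' : Summable (fun i => q (i + (N + 1))) := (summable_nat_add_iff (N + 1)).mpr hqsum
      have h12' : ∑' i, -c N * x (i + (N + 1)) ≤ ∑' i, q (i + (N + 1)) := by
        refine Summable.tsum_le_tsum (fun i => ?_) (hsx'.mul_left _) hq'
        have hii : k1 ≤ i + (N + 1) := by omega
        have hcc : c (i + (N + 1)) ≤ c N := hcmono N _ (by omega)
        have h18 := hcx (i + (N + 1)) hii
        have hxpos := (hx01 (i + (N + 1))).1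
        nlinarith
      have htail : -c N * A (N + 1) ≤ Q (N + 1) := by
        calc -c N * A (N + 1) ≤ -c N * ∑' i, x (i + (N + 1)) :=
              mul_le_mul_of_nonneg_left hAle hc
          _ = ∑' i, -c N * x (i + (N + 1)) := tsum_mul_left.symm
          _ ≤ ∑' i, q (i + (N + 1)) := h12'
          _ = Q (N + 1) := rfl
      have hst := star N
      linarith
    exact (tendsto_add_atTop_nat 1).frequently hev3.frequently
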